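/- If v is a cancelable valuation function, then for any sets S, T ⊆ M and any R ⊆ M \ (S ∪ T), v(S) = v(T) implies v(S ∪ R) = v(T ∪ R). -/
import Mathlib

/-- A valuation `v` on subsets of the goods is *cancelable* if
`v (S ∪ {g}) > v (T ∪ {g})` implies `v S > v T` for every `g ∉ S ∪ T`. -/
def Cancelable {G : Type*} [DecidableEq G] (v : Finset G → ℝ) : Prop :=
  ∀ S T : Finset G, ∀ g, g ∉ S ∪ T → v (insert g S) > v (insert g T) → v S > v T

lemma cancelable_insert_eq {G : Type*} [DecidableEq G] {v : Finset G → ℝ}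
    (hc : Cancelable v) {S T : Finset G} {g : G} (hg : g ∉ S ∪ T)
    (h : v S = v T) : v (insert g S) = v (insert g T) := by
  by_contra hne
  rcases lt_or_gt_of_ne hne with hlt | hgt
  · exact absurd (hc T S g (by simpa [Finset.union_comm] using hg) hlt) (by simp [h])
  · exact absurd (hc S T g hg hgt) (by simp [h])

/-- If `v` is cancelable, then for any sets `S, T` and any `R` disjoint from `S ∪ T`,
`v S = v T` implies `v (S ∪ R) = v (T ∪ R)`. -/
theorem cancelable_union_eq {G : Type*} [DecidableEq G] (v : Finset G → ℝ)
    (hnn : ∀ S, 0 ≤ v S) (hc : Cancelable v)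
    (S T R : Finset G) (hR : ∀ g ∈ R, g ∉ S ∪ T) :
    v S = v T → v (S ∪ R) = v (T ∪ R) := by
  induction R using Finset.induction_on with
  | empty => simp
  | @insert g R hgR ih =>
    intro h
    have hg := hR g (Finset.mem_insert_self g R)
    have ih' := ih (fun x hx => hR x (Finset.mem_insert_of_mem hx)) h
    have hg' : g ∉ (S ∪ R) ∪ (T ∪ R) := by
      simp only [Finset.mem_union, not_or] at hg ⊢
      exact ⟨⟨hg.1, hgR⟩, hg.2, hgR⟩
    simpa [Finset.union_insert] using cancelable_insert_eq hc hg' ih'
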